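/- arXiv:1904.03305 — 3 statements merged into one kernel-verified Lean document; each statement's English description precedes it below -/
import Mathlib

section
/- If the forgetting factor α satisfies 0 < α ≤ 0.5, then the FOFE encoding is injective: for any two finite sequences of words (of possibly different lengths) over a countable vocabulary V, if their FOFE codes are equal, the sequences are equal. -/
noncomputable def oneHot {V : Type*} [DecidableEq V] (w v : V) : ℝ := if v = w then 1 else 0

noncomputable def fofe {V : Type*} [DecidableEq V] (α : ℝ) (S : List V) : V → ℝ :=
  S.foldl (fun z w v => α * z v + oneHot w v) (fun _ => 0)

lemma fofe_nil {V : Type*} [DecidableEq V] (α : ℝ) : fofe (V := V) α [] = fun _ => 0 := rfl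

lemma fofe_concat {V : Type*} [DecidableEq V] (α : ℝ) (S : List V) (w : V) :
    fofe α (S ++ [w]) = fun v => α * fofe α S v + oneHot w v := by
  simp [fofe, List.foldl_append]

lemma fofe_nonneg {V : Type*} [DecidableEq V] {α : ℝ} (hα0 : 0 ≤ α) (S : List V) (v : V) :
    0 ≤ fofe α S v := by
  induction S using List.reverseRecOn with
  | nil => simp [fofe_nil]
  | append_singleton T w ih =>
      rw [fofe_concat]
      have h : (0:ℝ) ≤ oneHot w v := by unfold oneHot; split <;> norm_num
      have := mul_nonneg hα0 ih
      simp only []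
      linarith
  
lemma fofe_lt {V : Type*} [DecidableEq V] {α : ℝ} (hα0 : 0 < α) (hα : α ≤ 1/2) (S : List V)
    (v : V) : fofe α S v < (1 - α)⁻¹ := by
  have h2 : 0 < 1 - α := by linarith
  induction S using List.reverseRecOn with
  | nil =>
      rw [fofe_nil]
      positivity
  | append_singleton T w ih =>
      rw [fofe_concat]
      have hh : oneHot w v ≤ 1 := by unfold oneHot; split <;> norm_num
      have h3 : α * fofe α T v < α * (1 - α)⁻¹ := (mul_lt_mul_iff_right₀ hα0).mpr ih
      have key : α * (1 - α)⁻¹ + 1 = (1 - α)⁻¹ := by field_simp; ring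
      simp only []
      linarith

theorem fofe_injective {V : Type*} [Countable V] [DecidableEq V] {α : ℝ}
    (hα0 : 0 < α) (hα : α ≤ 1/2) :
    ∀ S S' : List V, fofe α S = fofe α S' → S = S' := by
  have h2 : 0 < 1 - α := by linarith
  have hle1 : α * (1 - α)⁻¹ ≤ 1 := by
    rw [← div_eq_mul_inv, div_le_one h2]; linarith
  intro S
  induction S using List.reverseRecOn with
  | nil =>
      intro S' h
      rcases S'.eq_nil_or_concat with rfl | ⟨T, w, rfl⟩
      · rfl
      · exfalso
        simp only [List.concat_eq_append] at h
        have hw := congrFun h w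
        rw [fofe_nil, fofe_concat] at hw
        simp [oneHot] at hw
        have h3 := fofe_nonneg hα0.le T w
        nlinarith
  | append_singleton T w ih =>
      intro S' h
      rcases S'.eq_nil_or_concat with rfl | ⟨T', w', rfl⟩
      · exfalso
        have hw := congrFun h w
        rw [fofe_nil, fofe_concat] at hw
        simp [oneHot] at hw
        have h3 := fofe_nonneg hα0.le T w
        nlinarith
      · simp only [List.concat_eq_append] at h ⊢
        have hww : w = w' := by
          by_contra hne
          have hw := congrFun h w
          rw [fofe_concat, fofe_concat] at hw
          simp [oneHot, hne] at hw
          have hlt := fofe_lt hα0 hα T' w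
          have hge := fofe_nonneg hα0.le T w
          have hbound : α * fofe α T' w < α * (1 - α)⁻¹ := (mul_lt_mul_iff_right₀ hα0).mpr hlt
          nlinarith
        subst hww
        have hT : fofe α T = fofe α T' := by
          funext v
          have hv := congrFun h v
          rw [fofe_concat, fofe_concat] at hv
          simp only [] at hv
          have : α * fofe α T v = α * fofe α T' v := by linarith
          exact mul_left_cancel₀ hα0.ne' this
        rw [ih _ hT]
end

section
/- For 0 < α ≤ 0.5 and any word v, the coordinate FOFE(S)(v) of the FOFE code, viewed as a number Σ_{n=1}^N α^{N-n}·b_n with b_n ∈ {0,1}, uniquely determines the binary string (b_1,…,b_N) given the length N: if Σ_{n=1}^N α^{N-n}·b_n = Σ_{n=1}^N α^{N-n}·c_n with b_n, c_n ∈ {0,1}, then b_n = c_n for all n. -/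
open Finset

private lemma fofe_bound {α : ℝ} (hα0 : 0 < α) (hα : α ≤ 1/2) :
    ∀ (M : ℕ) (f : ℕ → Bool),
      ∑ k ∈ range M, α ^ (k + 1) * (if f k then (1:ℝ) else 0) ≤ 1 - α ^ M := by
  intro M
  induction M with
  | zero => intro f; simp
  | succ M ih =>
    intro f
    rw [Finset.sum_range_succ]
    have h1 := ih f
    have h2 : α ^ (M + 1) * (if f M then (1:ℝ) else 0) ≤ α ^ (M + 1) := by
      have : (if f M then (1:ℝ) else 0) ≤ 1 := by split <;> norm_num
      nlinarith [pow_pos hα0 (M + 1)]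
    have h3 : 2 * α ^ (M + 1) ≤ α ^ M := by
      rw [pow_succ]
      nlinarith [pow_pos hα0 M]
    linarith

private lemma fofe_key {α : ℝ} (hα0 : 0 < α) (hα : α ≤ 1/2) :
    ∀ (M : ℕ) (f g : ℕ → Bool),
      ∑ k ∈ range M, α ^ k * (if f k then (1:ℝ) else 0) =
      ∑ k ∈ range M, α ^ k * (if g k then (1:ℝ) else 0) →
      ∀ k < M, f k = g k := by
  intro M
  induction M with
  | zero => intro f g _ k hk; omega
  | succ M ih =>
    intro f g h k hk
    rw [Finset.sum_range_succ', Finset.sum_range_succ'] at h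
    simp only [pow_zero, one_mul] at h
    set Sf := ∑ k ∈ range M, α ^ (k + 1) * (if f (k + 1) then (1:ℝ) else 0) with hSf_def
    set Sg := ∑ k ∈ range M, α ^ (k + 1) * (if g (k + 1) then (1:ℝ) else 0) with hSg_def
    have hSfb : Sf ≤ 1 - α ^ M := by rw [hSf_def]; exact fofe_bound hα0 hα M _
    have hSgb : Sg ≤ 1 - α ^ M := by rw [hSg_def]; exact fofe_bound hα0 hα M _
    have hSf0 : (0:ℝ) ≤ Sf := by
      rw [hSf_def]
      apply Finset.sum_nonneg
      intro i _
      have : (0:ℝ) ≤ (if f (i + 1) then (1:ℝ) else 0) := by split <;> norm_num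
      positivity
    have hSg0 : (0:ℝ) ≤ Sg := by
      rw [hSg_def]
      apply Finset.sum_nonneg
      intro i _
      have : (0:ℝ) ≤ (if g (i + 1) then (1:ℝ) else 0) := by split <;> norm_num
      positivity
    have hpow : (0:ℝ) < α ^ M := pow_pos hα0 M
    have h0 : f 0 = g 0 := by
      by_contra hne
      rcases Bool.eq_false_or_eq_true (f 0) with hf | hf <;>
        rcases Bool.eq_false_or_eq_true (g 0) with hg | hg <;>
          simp [hf, hg] at hne h ⊢ <;> linarith
    rw [h0] at h
    have h' : Sf = Sg := by
      rcases Bool.eq_false_or_eq_true (g 0) with hg | hg <;> simp [hg] at h <;> linarith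
    rw [hSf_def, hSg_def] at h'
    have h'' : ∑ k ∈ range M, α ^ k * (if f (k + 1) then (1:ℝ) else 0) =
        ∑ k ∈ range M, α ^ k * (if g (k + 1) then (1:ℝ) else 0) := by
      simp only [pow_succ', mul_assoc, ← Finset.mul_sum] at h'
      exact mul_left_cancel₀ (ne_of_gt hα0) h'
    rcases Nat.eq_zero_or_pos k with rfl | hkpos
    · exact h0
    · obtain ⟨j, rfl⟩ := Nat.exists_eq_succ_of_ne_zero (Nat.pos_iff_ne_zero.mp hkpos)
      exact ih (fun k => f (k + 1)) (fun k => g (k + 1)) h'' j (by omega)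

private lemma fofe_reindex {α : ℝ} {N : ℕ} (hN : 0 < N) (b : Fin N → Bool) :
    ∑ n : Fin N, α ^ (N - 1 - (n : ℕ)) * (if b n then (1:ℝ) else 0) =
    ∑ k ∈ range N, α ^ k *
      (if b ⟨N - 1 - k % N, by have := Nat.mod_lt k hN; omega⟩ then (1:ℝ) else 0) := by
  set x : ℕ → ℝ := fun k => α ^ k *
    (if b ⟨N - 1 - k % N, by have := Nat.mod_lt k hN; omega⟩ then (1:ℝ) else 0) with hx
  have step1 : ∀ n : Fin N,
      α ^ (N - 1 - (n : ℕ)) * (if b n then (1:ℝ) else 0) = x (N - 1 - (n : ℕ)) := by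
    intro n
    have hn := n.isLt
    simp only [hx]
    have hmn : (⟨N - 1 - (N - 1 - (n : ℕ)) % N,
        by have := Nat.mod_lt (N - 1 - (n : ℕ)) hN; omega⟩ : Fin N) = n := by
      apply Fin.ext
      have h2 : (N - 1 - (n : ℕ)) % N = N - 1 - (n : ℕ) := Nat.mod_eq_of_lt (by omega)
      simp only [h2]
      omega
    rw [hmn]
  calc ∑ n : Fin N, α ^ (N - 1 - (n : ℕ)) * (if b n then (1:ℝ) else 0)
      = ∑ n : Fin N, x (N - 1 - (n : ℕ)) := Finset.sum_congr rfl (fun n _ => step1 n)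
    _ = ∑ k ∈ range N, x (N - 1 - k) := Fin.sum_univ_eq_sum_range (fun k => x (N - 1 - k)) N
    _ = ∑ k ∈ range N, x k := Finset.sum_range_reflect x N

theorem fofe_coord_determines_string {α : ℝ} (hα0 : 0 < α) (hα : α ≤ 1/2)
    {N : ℕ} (b c : Fin N → Bool)
    (h : ∑ n : Fin N, α ^ (N - 1 - (n : ℕ)) * (if b n then (1:ℝ) else 0) =
         ∑ n : Fin N, α ^ (N - 1 - (n : ℕ)) * (if c n then (1:ℝ) else 0)) :
    b = c := by
  rcases Nat.eq_zero_or_pos N with rfl | hN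
  · funext n; exact n.elim0
  rw [fofe_reindex hN b, fofe_reindex hN c] at h
  have key := fofe_key hα0 hα N _ _ h
  funext n
  have hn := n.isLt
  have := key (N - 1 - (n : ℕ)) (by omega)
  have hmod : (N - 1 - (n : ℕ)) % N = N - 1 - (n : ℕ) := Nat.mod_eq_of_lt (by omega)
  simp only [hmod] at this
  have heq : (⟨N - 1 - (N - 1 - (n : ℕ)), by omega⟩ : Fin N) = n := Fin.ext (by simp; omega)
  rwa [heq] at this
end

section
/- For any nonzero polynomial p with coefficients in {−1, 0, 1} and 0 < α < 1/2, p(α) ≠ 0. -/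
open Polynomial Finset

lemma geom_sum_le_two {α : ℝ} (hα0 : 0 < α) (hα : α < 1/2) (m : ℕ) :
    ∑ j ∈ Finset.range m, α ^ j ≤ 2 := by
  have h1 : α ≠ 1 := by linarith
  rw [geom_sum_eq h1]
  rw [div_le_iff_of_neg (by linarith : α - 1 < 0)]
  have : (0:ℝ) ≤ α ^ m := by positivity
  nlinarith

theorem signed_poly_no_small_root (p : Polynomial ℝ) (hp : p ≠ 0)
    (hcoeff : ∀ k, p.coeff k ∈ ({-1, 0, 1} : Set ℝ))
    {α : ℝ} (hα0 : 0 < α) (hα : α < 1/2) :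
    p.eval α ≠ 0 := by
  intro h0
  set n := p.natTrailingDegree with hn
  set d := p.natDegree with hd
  have hnd : n ≤ d := Polynomial.natTrailingDegree_le_natDegree p
  have hcn : p.coeff n ≠ 0 := Polynomial.trailingCoeff_nonzero_iff_nonzero.mpr hp
  have hcnabs : |p.coeff n| = 1 := by
    rcases hcoeff n with h | h | h <;> simp_all
  have heval : ∑ i ∈ Finset.range (d + 1), p.coeff i * α ^ i = 0 := by
    rw [← Polynomial.eval_eq_sum_range, h0]
  have hsplit : ∑ i ∈ Finset.range (d + 1), p.coeff i * α ^ i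
      = ∑ i ∈ Finset.Ico n (d + 1), p.coeff i * α ^ i := by
    rw [Finset.range_eq_Ico, ← Finset.sum_Ico_consecutive _ (Nat.zero_le n) (by omega)]
    have : ∑ i ∈ Finset.Ico 0 n, p.coeff i * α ^ i = 0 := by
      apply Finset.sum_eq_zero
      intro i hi
      rw [Polynomial.coeff_eq_zero_of_lt_natTrailingDegree (Finset.mem_Ico.mp hi).2]
      ring
    rw [this, zero_add]
  have hbot : ∑ i ∈ Finset.Ico n (d + 1), p.coeff i * α ^ i
      = p.coeff n * α ^ n + ∑ i ∈ Finset.Ico (n + 1) (d + 1), p.coeff i * α ^ i :=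
    Finset.sum_eq_sum_Ico_succ_bot (by omega) _
  set S := ∑ i ∈ Finset.Ico (n + 1) (d + 1), p.coeff i * α ^ i with hS
  have hkey : p.coeff n * α ^ n = -S := by
    have := heval
    rw [hsplit, hbot] at this
    linarith
  have habs : α ^ n = |S| := by
    have : |p.coeff n * α ^ n| = |S| := by rw [hkey, abs_neg]
    rw [abs_mul, hcnabs, one_mul, abs_of_pos (by positivity)] at this
    exact this
  have hSle : |S| ≤ ∑ i ∈ Finset.Ico (n + 1) (d + 1), α ^ i := by
    calc |S| ≤ ∑ i ∈ Finset.Ico (n + 1) (d + 1), |p.coeff i * α ^ i| :=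
          Finset.abs_sum_le_sum_abs _ _
      _ ≤ ∑ i ∈ Finset.Ico (n + 1) (d + 1), α ^ i := by
          apply Finset.sum_le_sum
          intro i _
          rw [abs_mul, abs_of_pos (by positivity : (0:ℝ) < α ^ i)]
          have : |p.coeff i| ≤ 1 := by
            rcases (by simpa using hcoeff i : p.coeff i = -1 ∨ p.coeff i = 0 ∨ p.coeff i = 1) with h | h | h <;> simp [h]
          nlinarith [pow_pos hα0 i]
  have hgeom : ∑ i ∈ Finset.Ico (n + 1) (d + 1), α ^ i
      = α ^ (n + 1) * ∑ j ∈ Finset.range (d + 1 - (n + 1)), α ^ j := by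
    rw [Finset.sum_Ico_eq_sum_range, Finset.mul_sum]
    exact Finset.sum_congr rfl fun j _ => by rw [← pow_add, add_comm]
  have h2 : ∑ i ∈ Finset.Ico (n + 1) (d + 1), α ^ i ≤ α ^ (n + 1) * 2 := by
    rw [hgeom]
    exact mul_le_mul_of_nonneg_left (geom_sum_le_two hα0 hα _) (by positivity)
  have hlt : α ^ (n + 1) * 2 < α ^ n := by
    rw [pow_succ]
    nlinarith [pow_pos hα0 n]
  linarith [habs, hSle]
end
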